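/- arXiv:2512.20478 — 4 statements merged into one kernel-verified Lean document; each statement's English description precedes it below -/
import Mathlib

section
/- If (t_k) is defined by t_0 ≥ 1 and t_{k+1} = (m + sqrt(m^2 + 4 t_k^2))/2 with m ∈ (0,1], then for every k ≥ 0 one has mk/2 + t_0 ≤ t_k ≤ mk + t_0. -/
theorem t_growth_bounds (m : ℝ) (t : ℕ → ℝ)
    (hm : 0 < m) (hm1 : m ≤ 1) (ht0 : 1 ≤ t 0)
    (hrec : ∀ k, t (k + 1) = (m + Real.sqrt (m ^ 2 + 4 * (t k) ^ 2)) / 2) :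
    ∀ k : ℕ, m * k / 2 + t 0 ≤ t k ∧ t k ≤ m * k + t 0 := by
  intro k
  induction k with
  | zero => simp
  | succ k ih =>
    obtain ⟨hlo, hhi⟩ := ih
    have htk : 1 ≤ t k := by nlinarith
    constructor
    · have hs : 2 * t k ≤ Real.sqrt (m ^ 2 + 4 * (t k) ^ 2) := by
        rw [show (2 * t k) = Real.sqrt ((2 * t k) ^ 2) from
          (Real.sqrt_sq (by linarith)).symm]
        apply Real.sqrt_le_sqrt
        nlinarith
      rw [hrec k]
      push_cast
      nlinarith
    · have hs : Real.sqrt (m ^ 2 + 4 * (t k) ^ 2) ≤ m + 2 * t k := by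
        rw [show m + 2 * t k = Real.sqrt ((m + 2 * t k) ^ 2) from
          (Real.sqrt_sq (by linarith)).symm]
        apply Real.sqrt_le_sqrt
        nlinarith
      rw [hrec k]
      push_cast
      nlinarith
end

section
/- Let m ∈ (0,1) and let (t_k) satisfy t_{k+1} ≥ m(k+1)/2 + 1 for all k. If a positive sequence (s_k) satisfies s_{k+1} ≤ (1 + (1-m)/(t_{k+1}-1)) s_k for all k ≥ 0, then for every K ≥ 1, s_K ≤ s_0 · e^{2(1-m)/m} · K^{2(1-m)/m}. -/
theorem s_k_upper_bound (m : ℝ) (t s : ℕ → ℝ)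
    (hm : 0 < m) (hm1 : m < 1)
    (ht : ∀ k : ℕ, m * (k + 1) / 2 + 1 ≤ t (k + 1))
    (hspos : ∀ k, 0 < s k)
    (hsrec : ∀ k, s (k + 1) ≤ (1 + (1 - m) / (t (k + 1) - 1)) * s k) :
    ∀ K : ℕ, 1 ≤ K →
      s K ≤ s 0 * Real.exp (2 * (1 - m) / m) * (K : ℝ) ^ (2 * (1 - m) / m) := by
  set c := 2 * (1 - m) / m with hc
  have hc0 : 0 ≤ c := by
    apply div_nonneg <;> nlinarith
  have key : ∀ K : ℕ, s K ≤ s 0 * Real.exp (c * (harmonic K : ℝ)) := by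
    intro K
    induction K with
    | zero => simp
    | succ n ih =>
      have hn1 : (0:ℝ) < (n:ℝ) + 1 := by positivity
      have ht' : m * (n + 1) / 2 ≤ t (n + 1) - 1 := by linarith [ht n]
      have hpos : (0:ℝ) < m * (n + 1) / 2 := by positivity
      have h1 : (1 - m) / (t (n + 1) - 1) ≤ c / (n + 1) := by
        have h2 : (1 - m) / (t (n + 1) - 1) ≤ (1 - m) / (m * (n + 1) / 2) := by
          gcongr
        have h3 : (1 - m) / (m * (n + 1) / 2) = c / (n + 1) := by
          rw [hc]; field_simp
        linarith
      have hexp : 1 + c / (n + 1) ≤ Real.exp (c / (n + 1)) := by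
        have := Real.add_one_le_exp (c / (n + 1))
        linarith
      have hs1 : s (n + 1) ≤ (1 + c / (n + 1)) * s n := by
        have := hsrec n
        have hsn := (hspos n).le
        nlinarith
      have hs2 : s (n + 1) ≤ Real.exp (c / (n + 1)) * s n := by
        have hsn := (hspos n).le
        nlinarith
      calc s (n + 1) ≤ Real.exp (c / (n + 1)) * s n := hs2
        _ ≤ Real.exp (c / (n + 1)) * (s 0 * Real.exp (c * (harmonic n : ℝ))) := by
            have := Real.exp_pos (c / (n + 1))
            nlinarith
        _ = s 0 * Real.exp (c * (harmonic (n + 1) : ℝ)) := by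
            rw [harmonic_succ]
            push_cast
            rw [mul_add, Real.exp_add, mul_comm c ((n:ℝ)+1)⁻¹, ← div_eq_inv_mul]
            ring
  intro K hK
  have hK1 : (1:ℝ) ≤ (K:ℝ) := by exact_mod_cast hK
  have hKpos : (0:ℝ) < K := by linarith
  have hharm : (harmonic K : ℝ) ≤ 1 + Real.log K := harmonic_le_one_add_log K
  have h4 : Real.exp (c * (harmonic K : ℝ)) ≤ Real.exp (c * (1 + Real.log K)) := by
    apply Real.exp_le_exp.mpr
    nlinarith
  have h5 : Real.exp (c * (1 + Real.log K)) = Real.exp c * (K : ℝ) ^ c := by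
    rw [Real.rpow_def_of_pos hKpos, ← Real.exp_add]
    ring_nf
  have := key K
  have hs0 := (hspos 0).le
  calc s K ≤ s 0 * Real.exp (c * (harmonic K : ℝ)) := this
    _ ≤ s 0 * (Real.exp c * (K : ℝ) ^ c) := by
        rw [← h5]; nlinarith
    _ = s 0 * Real.exp c * (K : ℝ) ^ c := by ring
end

section
/- Let f : H → ℝ be convex and L-smooth, and define for points x, y with ∇f(y) ≠ ∇f(x) the local smoothness estimate L(x,y) = (½‖∇f(y) - ∇f(x)‖²)/(⟨∇f(y), y - x⟩ - (f(y) - f(x))). Then 0 < L(x,y) ≤ L. -/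
open Set InnerProductSpace

local notation "⟪" a ", " b "⟫" => @inner ℝ _ _ a b

section aux

variable {H : Type*} [NormedAddCommGroup H] [InnerProductSpace ℝ H] [CompleteSpace H]

/-- Derivative of the restriction of `f` to a line. -/
lemma line_hasDerivAt (f : H → ℝ) (f' : H → H)
    (hgrad : ∀ x, HasGradientAt f (f' x) x) (w z : H) (t : ℝ) :
    HasDerivAt (fun s : ℝ => f (w + s • (z - w))) ⟪f' (w + t • (z - w)), z - w⟫ t := by
  have h1 : HasFDerivAt f (toDual ℝ H (f' (w + t • (z - w)))) (w + t • (z - w)) := hgrad _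
  have h2 : HasDerivAt (fun s : ℝ => w + s • (z - w)) (z - w) t := by
    simpa using ((hasDerivAt_id t).smul_const (z - w)).const_add w
  have h3 := h1.comp_hasDerivAt t h2
  simp only [toDual_apply_apply] at h3
  exact h3

/-- Convexity of the restriction of `f` to a line. -/
lemma line_convexOn (f : H → ℝ) (hconv : ConvexOn ℝ Set.univ f) (w z : H) :
    ConvexOn ℝ (univ : Set ℝ) (fun s : ℝ => f (w + s • (z - w))) := by
  have := hconv.comp_affineMap (AffineMap.lineMap w z)
  have heq : (fun s : ℝ => f (w + s • (z - w))) = f ∘ (AffineMap.lineMap w z) := by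
    funext s
    simp [AffineMap.lineMap_apply, add_comm]
  rw [heq]
  simpa using this

/-- The gradient inequality for convex functions. -/
lemma grad_ineq (f : H → ℝ) (f' : H → H) (hconv : ConvexOn ℝ Set.univ f)
    (hgrad : ∀ x, HasGradientAt f (f' x) x) (w z : H) :
    f w + ⟪f' w, z - w⟫ ≤ f z := by
  have h := (line_convexOn f hconv w z).le_slope_of_hasDerivAt (mem_univ (0:ℝ))
    (mem_univ (1:ℝ)) one_pos (line_hasDerivAt f f' hgrad w z 0)
  simp only [slope_def_field] at h
  simp only [zero_smul, add_zero, one_smul] at h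
  have h1 : w + (z - w) = z := by abel
  rw [h1] at h
  -- h : ⟪f' w, z - w⟫ ≤ (f z - f w) / (1 - 0)
  nlinarith [h]

/-- The descent lemma for functions with Lipschitz gradient. -/
lemma descent_lemma (f : H → ℝ) (f' : H → H) (L : ℝ) (hL : 0 < L)
    (hgrad : ∀ x, HasGradientAt f (f' x) x)
    (hlip : ∀ x y, ‖f' x - f' y‖ ≤ L * ‖x - y‖) (w z : H) :
    f z ≤ f w + ⟪f' w, z - w⟫ + L / 2 * ‖z - w‖ ^ 2 := by
  set g : ℝ → ℝ := fun s => f (w + s • (z - w)) with hg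
  set g' : ℝ → ℝ := fun s => ⟪f' (w + s • (z - w)), z - w⟫ with hg'
  have hderiv : ∀ t : ℝ, HasDerivAt g (g' t) t := line_hasDerivAt f f' hgrad w z
  -- continuity of f'
  have hlipf' : LipschitzWith (Real.toNNReal L) f' := by
    rw [lipschitzWith_iff_dist_le_mul]
    intro a b
    rw [dist_eq_norm, dist_eq_norm]
    calc ‖f' a - f' b‖ ≤ L * ‖a - b‖ := hlip a b
    _ = Real.toNNReal L * ‖a - b‖ := by rw [Real.coe_toNNReal _ hL.le]
  have hcont : Continuous g' := by
    apply Continuous.inner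
    · exact (hlipf'.continuous.comp (by continuity))
    · exact continuous_const
  have hint : IntervalIntegrable g' MeasureTheory.volume 0 1 :=
    hcont.intervalIntegrable 0 1
  have hftc : ∫ t in (0:ℝ)..1, g' t = g 1 - g 0 :=
    intervalIntegral.integral_eq_sub_of_hasDerivAt
      (fun t _ => hderiv t) hint
  -- bound g' t ≤ g' 0 + L * t * ‖z - w‖ ^ 2 on [0,1]
  have hbound : ∀ t ∈ Icc (0:ℝ) 1, g' t ≤ g' 0 + L * t * ‖z - w‖ ^ 2 := by
    intro t ht
    have h1 : g' t - g' 0 = ⟪f' (w + t • (z - w)) - f' (w + (0:ℝ) • (z - w)), z - w⟫ := by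
      rw [inner_sub_left]
    have h2 : ⟪f' (w + t • (z - w)) - f' (w + (0:ℝ) • (z - w)), z - w⟫ ≤
        ‖f' (w + t • (z - w)) - f' (w + (0:ℝ) • (z - w))‖ * ‖z - w‖ :=
      real_inner_le_norm _ _
    have h3 : ‖f' (w + t • (z - w)) - f' (w + (0:ℝ) • (z - w))‖ ≤
        L * (t * ‖z - w‖) := by
      have := hlip (w + t • (z - w)) (w + (0:ℝ) • (z - w))
      have heq : (w + t • (z - w)) - (w + (0:ℝ) • (z - w)) = t • (z - w) := by
        simp
      rw [heq] at this
      rw [norm_smul] at this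
      simpa [abs_of_nonneg ht.1] using this
    nlinarith [norm_nonneg (z - w), mul_le_mul_of_nonneg_right h3 (norm_nonneg (z - w))]
  have hintRHS : IntervalIntegrable (fun t => g' 0 + L * t * ‖z - w‖ ^ 2)
      MeasureTheory.volume 0 1 := by
    apply Continuous.intervalIntegrable
    continuity
  have hmono : ∫ t in (0:ℝ)..1, g' t ≤
      ∫ t in (0:ℝ)..1, (g' 0 + L * t * ‖z - w‖ ^ 2) := by
    apply intervalIntegral.integral_mono_on (by norm_num) hint hintRHS
    intro t ht
    exact hbound t ht
  have hRHS : ∫ t in (0:ℝ)..1, (g' 0 + L * t * ‖z - w‖ ^ 2) =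
      g' 0 + L / 2 * ‖z - w‖ ^ 2 := by
    simp only [mul_comm, mul_assoc]
    rw [intervalIntegral.integral_add (by apply Continuous.intervalIntegrable; continuity)
      (by apply Continuous.intervalIntegrable; continuity)]
    simp [intervalIntegral.integral_const_mul, integral_id]
    ring
  have hg0 : g 0 = f w := by simp [hg]
  have hg1 : g 1 = f z := by simp [hg]
  have hg'0 : g' 0 = ⟪f' w, z - w⟫ := by simp [hg']
  rw [hftc, hRHS] at hmono
  -- hmono : g 1 - g 0 ≤ g' 0 + L/2 * ‖z-w‖²
  rw [hg0, hg1, hg'0] at hmono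
  linarith

/-- Co-coercivity key inequality. -/
lemma cocoercive (f : H → ℝ) (f' : H → H) (L : ℝ) (hL : 0 < L)
    (hconv : ConvexOn ℝ Set.univ f)
    (hgrad : ∀ x, HasGradientAt f (f' x) x)
    (hlip : ∀ x y, ‖f' x - f' y‖ ≤ L * ‖x - y‖) (x y : H) :
    1 / (2 * L) * ‖f' y - f' x‖ ^ 2 ≤ ⟪f' y, y - x⟫ - (f y - f x) := by
  -- consider ψ u = f u - ⟪f' y, u⟫, with gradient ψ' u = f' u - f' y
  set ψ : H → ℝ := fun u => f u - ⟪f' y, u⟫ with hψ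
  set ψ' : H → H := fun u => f' u - f' y with hψ'
  have hψgrad : ∀ u, HasGradientAt ψ (ψ' u) u := by
    intro u
    have h1 : HasFDerivAt f (toDual ℝ H (f' u)) u := hgrad u
    have h2 : HasFDerivAt (fun v : H => (⟪f' y, v⟫ : ℝ)) (innerSL ℝ (f' y)) u :=
      (innerSL ℝ (f' y)).hasFDerivAt
    have h3 : HasFDerivAt ψ (toDual ℝ H (f' u) - innerSL ℝ (f' y)) u := h1.sub h2
    rw [hasGradientAt_iff_hasFDerivAt]
    have e : toDual ℝ H (ψ' u) = toDual ℝ H (f' u) - innerSL ℝ (f' y) := by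
      ext v
      simp [ψ', inner_sub_left, toDual_apply_apply]
    rw [e]; exact h3
  have hψconv : ConvexOn ℝ Set.univ ψ := by
    have hlin : ConvexOn ℝ (Set.univ : Set H) (fun u : H => -⟪f' y, u⟫) := by
      have : ConvexOn ℝ (Set.univ : Set H) (fun u : H => ((-(innerSL ℝ (f' y))).toLinearMap u : ℝ)) :=
        LinearMap.convexOn _ convex_univ
      convert this using 1
      funext u; simp
    have := hconv.add hlin
    have heq : ψ = f + fun u => -⟪f' y, u⟫ := by
      funext u; simp [hψ, sub_eq_add_neg]
    rw [heq]; exact this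
  have hψlip : ∀ u v, ‖ψ' u - ψ' v‖ ≤ L * ‖u - v‖ := by
    intro u v
    have : ψ' u - ψ' v = f' u - f' v := by simp [hψ']
    rw [this]; exact hlip u v
  -- ψ'(y) = 0, so ψ(y) ≤ ψ(u) for all u
  have hψ'y : ψ' y = 0 := by simp [hψ']
  have hmin : ∀ u, ψ y ≤ ψ u := by
    intro u
    have := grad_ineq ψ ψ' hψconv hψgrad y u
    rw [hψ'y] at this
    simpa using this
  -- descent at x towards x - (1/L) • ψ' x
  set z : H := x - (1/L) • ψ' x with hz
  have hdesc := descent_lemma ψ ψ' L hL hψgrad hψlip x z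
  have hzx : z - x = -((1/L) • ψ' x) := by rw [hz]; abel
  have hinner : ⟪ψ' x, z - x⟫ = -(1/L) * ‖ψ' x‖ ^ 2 := by
    rw [hzx, inner_neg_right, real_inner_smul_right, real_inner_self_eq_norm_sq]
    ring
  have hnorm : ‖z - x‖ ^ 2 = (1/L)^2 * ‖ψ' x‖ ^ 2 := by
    rw [hzx, norm_neg, norm_smul, mul_pow, Real.norm_eq_abs,
      abs_of_pos (by positivity : (0:ℝ) < 1/L)]
  rw [hinner, hnorm] at hdesc
  have key : ψ y ≤ ψ x - 1/(2*L) * ‖ψ' x‖ ^ 2 := by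
    have h2 : ψ x + -(1 / L) * ‖ψ' x‖ ^ 2 + L / 2 * ((1 / L) ^ 2 * ‖ψ' x‖ ^ 2) =
        ψ x - 1/(2*L) * ‖ψ' x‖ ^ 2 := by
      field_simp
      ring
    calc ψ y ≤ ψ z := hmin z
      _ ≤ ψ x + -(1 / L) * ‖ψ' x‖ ^ 2 + L / 2 * ((1 / L) ^ 2 * ‖ψ' x‖ ^ 2) := hdesc
      _ = ψ x - 1/(2*L) * ‖ψ' x‖ ^ 2 := h2
  -- unfold
  have hψx : ψ x = f x - ⟪f' y, x⟫ := rfl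
  have hψy : ψ y = f y - ⟪f' y, y⟫ := rfl
  have hψ'x : ψ' x = f' x - f' y := rfl
  rw [hψx, hψy, hψ'x] at key
  have hn : ‖f' x - f' y‖ = ‖f' y - f' x‖ := by rw [← norm_neg]; congr 1; abel
  rw [hn] at key
  have hi : ⟪f' y, y - x⟫ = ⟪f' y, y⟫ - ⟪f' y, x⟫ := by rw [inner_sub_right]
  linarith [key, hi.symm.le, hi.le]

end aux

theorem local_smoothness_estimate {H : Type*} [NormedAddCommGroup H]
    [InnerProductSpace ℝ H] [CompleteSpace H]
    (f : H → ℝ) (f' : H → H) (L : ℝ) (hL : 0 < L)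
    (hconv : ConvexOn ℝ Set.univ f)
    (hgrad : ∀ x, HasGradientAt f (f' x) x)
    (hlip : ∀ x y, ‖f' x - f' y‖ ≤ L * ‖x - y‖)
    (x y : H) (hxy : f' y ≠ f' x) :
    0 < ((1 / 2) * ‖f' y - f' x‖ ^ 2) /
          ((inner ℝ (f' y) (y - x) : ℝ) - (f y - f x)) ∧
      ((1 / 2) * ‖f' y - f' x‖ ^ 2) /
          ((inner ℝ (f' y) (y - x) : ℝ) - (f y - f x)) ≤ L := by
  have hkey := cocoercive f f' L hL hconv hgrad hlip x y
  have hpos : 0 < ‖f' y - f' x‖ ^ 2 := by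
    have : f' y - f' x ≠ 0 := sub_ne_zero_of_ne hxy
    exact pow_pos (norm_pos_iff.mpr this) 2
  have hDpos : 0 < (inner ℝ (f' y) (y - x) : ℝ) - (f y - f x) := by
    have : 0 < 1 / (2 * L) * ‖f' y - f' x‖ ^ 2 := mul_pos (by positivity) hpos
    linarith
  constructor
  · exact div_pos (by nlinarith) hDpos
  · rw [div_le_iff₀ hDpos]
    have h2 : 1 / (2 * L) * ‖f' y - f' x‖ ^ 2 =
        (1 / 2 * ‖f' y - f' x‖ ^ 2) / L := by field_simp
    rw [h2, div_le_iff₀ hL] at hkey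
    linarith
end

section
/- Let (u_k) be a real sequence and (ζ_k) a positive sequence with Σ_{k=0}^∞ 1/ζ_k = ∞. If lim_{k→∞} [u_{k+1} + ζ_k(u_{k+1} - u_k)] = b for some real b, then lim_{k→∞} u_k = b. -/
open Filter

theorem sequence_limit_lemma (u ζ : ℕ → ℝ) (b : ℝ)
    (hζ : ∀ k, 0 < ζ k)
    (hdiv : Tendsto (fun n => ∑ k ∈ Finset.range n, 1 / ζ k) atTop atTop)
    (hlim : Tendsto (fun k => u (k + 1) + ζ k * (u (k + 1) - u k)) atTop (nhds b)) :
    Tendsto u atTop (nhds b) := by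
  set v : ℕ → ℝ := fun k => u (k + 1) + ζ k * (u (k + 1) - u k) with hv
  have hζ1 : ∀ k, (0:ℝ) < 1 + ζ k := fun k => by linarith [hζ k]
  set α : ℕ → ℝ := fun k => ζ k / (1 + ζ k) with hα
  have hα0 : ∀ k, 0 ≤ α k := fun k => div_nonneg (hζ k).le (hζ1 k).le
  -- 1/ζ is not summable
  have hns : ¬ Summable (fun k => 1 / ζ k) := by
    intro hs
    exact absurd hdiv ((summable_iff_not_tendsto_nat_atTop_of_nonneg
      (fun k => div_nonneg zero_le_one (hζ k).le)).mp hs)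
  -- partial sums of 1/(1+ζ) tend to atTop
  have hB : Tendsto (fun n => ∑ k ∈ Finset.range n, 1 / (1 + ζ k)) atTop atTop := by
    by_contra h
    have hs : Summable (fun k => 1 / (1 + ζ k)) :=
      (summable_iff_not_tendsto_nat_atTop_of_nonneg
        (fun k => div_nonneg zero_le_one (hζ1 k).le)).mpr h
    have hmin : Summable (fun k => min 1 (1 / ζ k)) := by
      apply Summable.of_nonneg_of_le
        (fun k => le_min zero_le_one (div_nonneg zero_le_one (hζ k).le)) (fun k => ?_) (hs.mul_left 2)
      rcases le_total (ζ k) 1 with h1 | h1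
      · calc min 1 (1 / ζ k) ≤ 1 := min_le_left _ _
          _ ≤ 2 * (1 / (1 + ζ k)) := by
              rw [mul_one_div, le_div_iff₀ (hζ1 k)]; linarith
      · calc min 1 (1 / ζ k) ≤ 1 / ζ k := min_le_right _ _
          _ ≤ 2 * (1 / (1 + ζ k)) := by
              rw [mul_one_div, div_le_div_iff₀ (hζ k) (hζ1 k)]; linarith
    have h0 : Tendsto (fun k => min 1 (1 / ζ k)) atTop (nhds 0) :=
      hmin.tendsto_atTop_zero
    have hev : ∀ᶠ k in atTop, min 1 (1 / ζ k) = 1 / ζ k := by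
      filter_upwards [h0.eventually (gt_mem_nhds one_pos)] with k hk
      rcases min_cases 1 (1 / ζ k) with ⟨he, _⟩ | ⟨he, _⟩
      · rw [he] at hk; linarith
      · exact he
    rcases eventually_atTop.mp hev with ⟨N, hN⟩
    apply hns
    have hsum : Summable (fun n => 1 / ζ (n + N)) := by
      have h1 := (summable_nat_add_iff N).mpr hmin
      exact h1.congr (fun n => hN (n + N) (Nat.le_add_left N n))
    exact (summable_nat_add_iff N).mp hsum
  rw [Metric.tendsto_atTop] at hlim ⊢
  intro ε hε
  obtain ⟨N, hN⟩ := hlim (ε / 3) (by linarith)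
  -- key recursion bound
  have key : ∀ n, N ≤ n →
      |u n - b| - ε / 3 ≤ (∏ j ∈ Finset.Ico N n, α j) * (|u N - b| - ε / 3) := by
    intro n hn
    induction n, hn using Nat.le_induction with
    | base => simp
    | succ n hn ih =>
      have hrec : u (n + 1) - b = α n * (u n - b) + (v n - b) / (1 + ζ n) := by
        have hζn := (hζ1 n).ne'
        simp only [hα, hv]
        field_simp [hα, hv]
        ring
      have hne : (1 + ζ n) ≠ 0 := (hζ1 n).ne'
      have h1 : |u (n + 1) - b| ≤ α n * |u n - b| + |v n - b| / (1 + ζ n) := by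
        rw [hrec]
        have ha : |α n * (u n - b)| = α n * |u n - b| := by
          rw [abs_mul, abs_of_nonneg (hα0 n)]
        have hb : |(v n - b) / (1 + ζ n)| = |v n - b| / (1 + ζ n) := by
          rw [abs_div, abs_of_pos (hζ1 n)]
        calc |α n * (u n - b) + (v n - b) / (1 + ζ n)|
            ≤ |α n * (u n - b)| + |(v n - b) / (1 + ζ n)| := abs_add_le _ _
          _ = α n * |u n - b| + |v n - b| / (1 + ζ n) := by rw [ha, hb]
      have h2 : |v n - b| ≤ ε / 3 := by
        have h3 := hN n hn
        rw [Real.dist_eq] at h3; linarith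
      have h1α : 1 - α n = 1 / (1 + ζ n) := by
        show 1 - ζ n / (1 + ζ n) = 1 / (1 + ζ n)
        field_simp
        ring
      have h3 : |v n - b| / (1 + ζ n) ≤ (1 - α n) * (ε / 3) := by
        rw [h1α, one_div, inv_mul_eq_div]
        gcongr
        all_goals first | exact (hζ1 n).le | exact h2
      have hstep : |u (n + 1) - b| - ε / 3 ≤ α n * (|u n - b| - ε / 3) := by
        nlinarith [h1, h3]
      calc |u (n + 1) - b| - ε / 3 ≤ α n * (|u n - b| - ε / 3) := hstep
        _ ≤ α n * ((∏ j ∈ Finset.Ico N n, α j) * (|u N - b| - ε / 3)) :=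
            mul_le_mul_of_nonneg_left ih (hα0 n)
        _ = (∏ j ∈ Finset.Ico N (n + 1), α j) * (|u N - b| - ε / 3) := by
            rw [Finset.prod_Ico_succ_top hn]; ring
  -- the product tends to 0
  have hP : Tendsto (fun n => ∏ j ∈ Finset.Ico N n, α j) atTop (nhds 0) := by
    have hub : ∀ n, (∏ j ∈ Finset.Ico N n, α j)
        ≤ Real.exp (-(∑ j ∈ Finset.Ico N n, 1 / (1 + ζ j))) := by
      intro n
      have : Real.exp (-(∑ j ∈ Finset.Ico N n, 1 / (1 + ζ j)))
          = ∏ j ∈ Finset.Ico N n, Real.exp (-(1 / (1 + ζ j))) := by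
        rw [← Real.exp_sum, ← Finset.sum_neg_distrib]
      rw [this]
      apply Finset.prod_le_prod (fun j _ => hα0 j)
      intro j _
      have hle := Real.add_one_le_exp (-(1 / (1 + ζ j)))
      have hne : (1 + ζ j) ≠ 0 := (hζ1 j).ne'
      have heq : α j = 1 - 1 / (1 + ζ j) := by
        show ζ j / (1 + ζ j) = 1 - 1 / (1 + ζ j)
        field_simp
        ring
      rw [heq]; linarith
    have htail : Tendsto (fun n => ∑ j ∈ Finset.Ico N n, 1 / (1 + ζ j)) atTop atTop := by
      apply Tendsto.congr' (f₁ := fun n =>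
        (∑ k ∈ Finset.range n, 1 / (1 + ζ k)) - ∑ k ∈ Finset.range N, 1 / (1 + ζ k))
      · filter_upwards [eventually_ge_atTop N] with n hn
        rw [Finset.sum_Ico_eq_sub _ hn]
      · exact tendsto_atTop_add_const_right atTop _ hB
    have hexp : Tendsto (fun n => Real.exp (-(∑ j ∈ Finset.Ico N n, 1 / (1 + ζ j))))
        atTop (nhds 0) :=
      Real.tendsto_exp_atBot.comp (tendsto_neg_atTop_atBot.comp htail)
    exact squeeze_zero (fun n => Finset.prod_nonneg (fun j _ => hα0 j)) hub hexp
  have hcase : |u N - b| ≥ 0 := abs_nonneg _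
  have hP2 : Tendsto (fun n => (∏ j ∈ Finset.Ico N n, α j) * |u N - b|) atTop (nhds 0) := by
    simpa using hP.mul_const (|u N - b|)
  have hev : ∀ᶠ n in atTop, (∏ j ∈ Finset.Ico N n, α j) * |u N - b| < ε / 3 :=
    hP2.eventually (gt_mem_nhds (by linarith : (0:ℝ) < ε / 3))
  rcases eventually_atTop.mp hev with ⟨M, hM⟩
  refine ⟨max N M, fun n hn => ?_⟩
  have hnN : N ≤ n := le_trans (le_max_left _ _) hn
  have hnM : M ≤ n := le_trans (le_max_right _ _) hn
  have hk := key n hnN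
  have hprod : (∏ j ∈ Finset.Ico N n, α j) * (|u N - b| - ε / 3)
      ≤ (∏ j ∈ Finset.Ico N n, α j) * |u N - b| :=
    mul_le_mul_of_nonneg_left (by linarith) (Finset.prod_nonneg (fun j _ => hα0 j))
  have hMn := hM n hnM
  rw [Real.dist_eq]
  calc |u n - b| ≤ ε / 3 + (∏ j ∈ Finset.Ico N n, α j) * (|u N - b| - ε / 3) := by linarith
    _ ≤ ε / 3 + (∏ j ∈ Finset.Ico N n, α j) * |u N - b| := by linarith
    _ < ε / 3 + ε / 3 := by linarith
    _ < ε := by linarith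
end
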